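/- The balanced hypercube BH_n is vertex-transitive: for any two vertices u, v of BH_n there exists a graph automorphism of BH_n mapping u to v. -/
import Mathlib


open SimpleGraph

/-- One step of the balanced-hypercube adjacency relation. -/
def bhRel (n : ℕ) (u v : Fin n → ZMod 4) : Prop :=
  ∃ (hn : 0 < n) (s : ZMod 4), (s = 1 ∨ s = -1) ∧
    (v = Function.update u ⟨0, hn⟩ (u ⟨0, hn⟩ + s) ∨
      ∃ i : Fin n, i ≠ ⟨0, hn⟩ ∧
        v = Function.update (Function.update u ⟨0, hn⟩ (u ⟨0, hn⟩ + s)) i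
              (u i + (if Even (u ⟨0, hn⟩).val then 1 else -1)))

/-- The balanced hypercube `BH n` on vertex set `{0,1,2,3}^n`. -/
def BH (n : ℕ) : SimpleGraph (Fin n → ZMod 4) :=
  SimpleGraph.fromRel (bhRel n)

/-- A vertex is white if its inner index is even. -/
def IsWhite {n : ℕ} (hn : 0 < n) (u : Fin n → ZMod 4) : Prop :=
  Even (u ⟨0, hn⟩).val

/-- A vertex is black if its inner index is odd. -/
def IsBlack {n : ℕ} (hn : 0 < n) (u : Fin n → ZMod 4) : Prop :=
  Odd (u ⟨0, hn⟩).val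

lemma zmod4_sign : ∀ x y : ZMod 4,
    (if Even y.val then (1:ZMod 4) else -1) * (if Even x.val then (1:ZMod 4) else -1)
      = if Even (x + y).val then 1 else -1 := by decide

lemma zmod4_neg_even : ∀ y : ZMod 4,
    (if Even ((-y).val) then (1:ZMod 4) else -1) = if Even y.val then 1 else -1 := by decide

lemma bhRel_map (n : ℕ) (hn : 0 < n) (ε c : Fin n → ZMod 4)
    (hε0 : ε ⟨0, hn⟩ = 1)
    (hεi : ∀ j, j ≠ (⟨0, hn⟩ : Fin n) → ε j = if Even ((c ⟨0, hn⟩).val) then 1 else -1)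
    (u v : Fin n → ZMod 4) (h : bhRel n u v) :
    bhRel n (fun j => ε j * u j + c j) (fun j => ε j * v j + c j) := by
  obtain ⟨hn', s, hs, hv⟩ := h
  set z : Fin n := ⟨0, hn⟩ with hz
  refine ⟨hn, s, hs, ?_⟩
  rw [show ((⟨0, hn⟩ : Fin n)) = z from rfl]
  rcases hv with hv | ⟨i, hiz, hv⟩
  · left
    funext j
    rw [hv]
    simp only [Function.update_apply]
    by_cases hj : j = z
    · simp only [hj, if_pos rfl, hε0]; split_ifs <;> ring
    · simp [hj]
  · right
    refine ⟨i, hiz, ?_⟩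
    funext j
    rw [hv]
    simp only [Function.update_apply, hε0]
    have hsign : ε i * (if Even ((u z).val) then (1:ZMod 4) else -1)
        = if Even ((u z + c z).val) then 1 else -1 := by
      rw [hεi i hiz]; exact zmod4_sign (u z) (c z)
    have hz1 : (1 : ZMod 4) * u z + c z = u z + c z := by ring
    rw [hz1, ← hsign]
    by_cases hji : j = i
    · subst hji
      simp only [if_pos rfl, if_true]
      ring
    · simp only [if_neg hji]
      by_cases hj : j = z
      · simp only [hj, if_pos rfl, hε0]; split_ifs <;> ring
      · simp [hj]

/-- `BH n` is vertex-transitive. -/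
theorem BH_vertexTransitive (n : ℕ) (hn : 1 ≤ n) (u v : Fin n → ZMod 4) :
    ∃ φ : BH n ≃g BH n, φ u = v := by
  have h0 : 0 < n := hn
  set z : Fin n := ⟨0, h0⟩ with hz
  set e : ZMod 4 := if Even ((v z - u z).val) then 1 else -1 with he
  set ε : Fin n → ZMod 4 := fun j => if j = z then 1 else e with hε
  set c : Fin n → ZMod 4 := fun j => v j - ε j * u j with hc
  have hε0 : ε z = 1 := if_pos rfl
  have hcz : c z = v z - u z := by rw [hc]; simp only [hε0]; ring
  have hεi : ∀ j, j ≠ z → ε j = if Even ((c z).val) then 1 else -1 := by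
    intro j hj
    rw [hε]; simp only [if_neg hj]; rw [he, hcz]
  have hee : ∀ j, ε j * ε j = 1 := by
    intro j
    rw [hε]
    by_cases hj : j = z
    · simp [hj]
    · simp only [if_neg hj, he]
      split_ifs <;> decide
  set c' : Fin n → ZMod 4 := fun j => -(ε j * c j) with hc'
  have hc'z : c' z = -(c z) := by rw [hc']; simp only [hε0]; ring
  have hεi' : ∀ j, j ≠ z → ε j = if Even ((c' z).val) then 1 else -1 := by
    intro j hj
    rw [hc'z, zmod4_neg_even]
    exact hεi j hj
  set T : (Fin n → ZMod 4) → (Fin n → ZMod 4) := fun a j => ε j * a j + c j with hT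
  set T' : (Fin n → ZMod 4) → (Fin n → ZMod 4) := fun a j => ε j * a j + c' j with hT'
  have hTT' : ∀ a, T' (T a) = a := by
    intro a; funext j
    show ε j * (ε j * a j + c j) + -(ε j * c j) = a j
    linear_combination a j * hee j
  have hT'T : ∀ a, T (T' a) = a := by
    intro a; funext j
    show ε j * (ε j * a j + -(ε j * c j)) + c j = a j
    linear_combination (a j - c j) * hee j
  have hrel : ∀ a b, bhRel n a b → bhRel n (T a) (T b) :=
    fun a b h => bhRel_map n h0 ε c hε0 hεi a b h
  have hrel' : ∀ a b, bhRel n a b → bhRel n (T' a) (T' b) :=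
    fun a b h => bhRel_map n h0 ε c' hε0 hεi' a b h
  refine ⟨⟨Equiv.mk T T' hTT' hT'T, ?_⟩, ?_⟩
  · intro a b
    show (SimpleGraph.fromRel (bhRel n)).Adj (T a) (T b) ↔
      (SimpleGraph.fromRel (bhRel n)).Adj a b
    simp only [SimpleGraph.fromRel_adj]
    constructor
    · rintro ⟨hne, h | h⟩
      · refine ⟨fun hab => hne (by rw [hab]), Or.inl ?_⟩
        have := hrel' _ _ h; rwa [hTT', hTT'] at this
      · refine ⟨fun hab => hne (by rw [hab]), Or.inr ?_⟩
        have := hrel' _ _ h; rwa [hTT', hTT'] at this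
    · rintro ⟨hne, h | h⟩
      · exact ⟨fun hab => hne (by rw [← hTT' a, ← hTT' b, hab]), Or.inl (hrel _ _ h)⟩
      · exact ⟨fun hab => hne (by rw [← hTT' a, ← hTT' b, hab]), Or.inr (hrel _ _ h)⟩
  · show T u = v
    funext j
    show ε j * u j + (v j - ε j * u j) = v j
    ring
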